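/- arXiv:2605.20222 — 4 statements merged into one kernel-verified Lean document; each statement's English description precedes it below -/
import Mathlib

section
/- Let P and H be n×n complex matrices with P Hermitian, P² = I, and H Hermitian, and let ψ ∈ ℂⁿ. Define f : ℝ → ℝ by f(a) = Re⟨exp(−i a P)ψ, H exp(−i a P)ψ⟩. Then there exist real constants c₀, c₁, c₂ such that f(a) = c₀ + c₁ cos(2a) + c₂ sin(2a) for all a ∈ ℝ. -/
open scoped Matrix

section LocalNorm

attribute [local instance] Matrix.linftyOpNormedRing Matrix.linftyOpNormedAlgebra

lemma exp_neg_I_smul_involution {n : ℕ} (P : Matrix (Fin n) (Fin n) ℂ) (hP2 : P ^ 2 = 1)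
    (a : ℝ) :
    NormedSpace.exp ((-(Complex.I * (a : ℂ))) • P)
      = (Real.cos a : ℂ) • (1 : Matrix (Fin n) (Fin n) ℂ)
        + (-(Complex.I * (Real.sin a : ℂ))) • P := by
  set z : ℂ := -(Complex.I * (a : ℂ)) with hz
  have hz2 : z ^ 2 = -((a : ℂ) ^ 2) := by
    simp only [hz]
    rw [neg_pow, mul_pow, Complex.I_sq]
    ring
  have he : HasSum (fun k : ℕ => (((2 * k).factorial : ℂ)⁻¹) • (z • P) ^ (2 * k))
      ((Real.cos a : ℂ) • (1 : Matrix (Fin n) (Fin n) ℂ)) := by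
    have h1 := (Complex.hasSum_cos (a : ℂ)).smul_const (1 : Matrix (Fin n) (Fin n) ℂ)
    rw [← Complex.ofReal_cos] at h1
    convert h1 using 2 with k
    rw [smul_pow, pow_mul, pow_mul, hP2, one_pow, hz2, neg_pow, ← pow_mul, smul_smul]
    congr 1
    ring
  have ho : HasSum (fun k : ℕ => (((2 * k + 1).factorial : ℂ)⁻¹) • (z • P) ^ (2 * k + 1))
      ((-(Complex.I * (Real.sin a : ℂ))) • P) := by
    have h1 := (((Complex.hasSum_sin (a : ℂ)).mul_left (-Complex.I))).smul_const P
    rw [← Complex.ofReal_sin] at h1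
    rw [neg_mul Complex.I ((Real.sin a : ℂ))] at h1
    convert h1 using 2 with k
    rw [smul_pow]
    have : z ^ (2 * k + 1) = z ^ (2 * k) * z := by ring
    rw [this, pow_mul, hz2, neg_pow, ← pow_mul]
    have hPp : P ^ (2 * k + 1) = P := by
      rw [pow_succ, pow_mul, hP2, one_pow, one_mul]
    rw [hPp, smul_smul]
    congr 1
    simp only [hz]
    ring
  have h : HasSum (fun k : ℕ => ((k.factorial : ℂ)⁻¹) • (z • P) ^ k)
      ((Real.cos a : ℂ) • (1 : Matrix (Fin n) (Fin n) ℂ)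
        + (-(Complex.I * (Real.sin a : ℂ))) • P) := HasSum.even_add_odd he ho
  exact ((NormedSpace.exp_series_hasSum_exp' (z • P)).unique h)

end LocalNorm

/-- **Trigonometric structure of single-parameter gate expectations.** Let `P` and `H` be
`n × n` complex matrices with `P` Hermitian, `P² = 1`, and `H` Hermitian, and let
`ψ ∈ ℂⁿ`. Define `f a = Re ⟨exp(-i a P) ψ, H exp(-i a P) ψ⟩`. Then there exist real
constants `c₀, c₁, c₂` with `f a = c₀ + c₁ cos (2a) + c₂ sin (2a)` for all `a : ℝ`. -/
theorem gate_expectation_trigonometric {n : ℕ} (P H : Matrix (Fin n) (Fin n) ℂ)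
    (hP : P.IsHermitian) (hP2 : P ^ 2 = 1) (hH : H.IsHermitian) (ψ : Fin n → ℂ) :
    ∃ c₀ c₁ c₂ : ℝ, ∀ a : ℝ,
      (star ((NormedSpace.exp ((-(Complex.I * (a : ℂ))) • P)).mulVec ψ) ⬝ᵥ
        H.mulVec ((NormedSpace.exp ((-(Complex.I * (a : ℂ))) • P)).mulVec ψ)).re
      = c₀ + c₁ * Real.cos (2 * a) + c₂ * Real.sin (2 * a) := by
  set u : Fin n → ℂ := P.mulVec ψ with hu
  set A : ℂ := star ψ ⬝ᵥ H.mulVec ψ with hA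
  set B : ℂ := star u ⬝ᵥ H.mulVec u with hB
  set X : ℂ := star ψ ⬝ᵥ H.mulVec u with hX
  set Y : ℂ := star u ⬝ᵥ H.mulVec ψ with hY
  refine ⟨(A.re + B.re) / 2, (A.re - B.re) / 2, (X.im - Y.im) / 2, fun a => ?_⟩
  rw [exp_neg_I_smul_involution P hP2 a]
  set c : ℝ := Real.cos a with hc
  set s : ℝ := Real.sin a with hs
  have hmv : ((c : ℂ) • (1 : Matrix (Fin n) (Fin n) ℂ)
      + (-(Complex.I * (s : ℂ))) • P).mulVec ψ
      = (c : ℂ) • ψ + (-(Complex.I * (s : ℂ))) • u := by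
    rw [Matrix.add_mulVec, Matrix.smul_mulVec, Matrix.smul_mulVec,
      Matrix.one_mulVec, hu]
  rw [hmv]
  have hexp : (star ((c : ℂ) • ψ + (-(Complex.I * (s : ℂ))) • u) ⬝ᵥ
      H.mulVec ((c : ℂ) • ψ + (-(Complex.I * (s : ℂ))) • u))
      = (starRingEnd ℂ (c : ℂ) * (c : ℂ)) * A
        + (starRingEnd ℂ (c : ℂ) * (-(Complex.I * (s : ℂ)))) * X
        + (starRingEnd ℂ (-(Complex.I * (s : ℂ))) * (c : ℂ)) * Y
        + (starRingEnd ℂ (-(Complex.I * (s : ℂ))) * (-(Complex.I * (s : ℂ)))) * B := by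
    simp only [star_add, star_smul, Matrix.mulVec_add, Matrix.mulVec_smul,
      add_dotProduct, dotProduct_add, smul_dotProduct,
      dotProduct_smul, smul_eq_mul, RCLike.star_def, hA, hB, hX, hY]
    ring
  rw [hexp]
  have hconjc : starRingEnd ℂ (c : ℂ) = (c : ℂ) := Complex.conj_ofReal c
  have hconjw : starRingEnd ℂ (-(Complex.I * (s : ℂ))) = Complex.I * (s : ℂ) := by
    simp [Complex.conj_ofReal]
  rw [hconjc, hconjw]
  have hre : ((c : ℂ) * (c : ℂ) * A + (c : ℂ) * (-(Complex.I * (s : ℂ))) * X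
      + (Complex.I * (s : ℂ)) * (c : ℂ) * Y
      + (Complex.I * (s : ℂ)) * (-(Complex.I * (s : ℂ))) * B).re
      = c * c * A.re + c * s * X.im - s * c * Y.im + s * s * B.re := by
    simp [Complex.add_re, Complex.mul_re, Complex.mul_im, Complex.ofReal_re,
      Complex.ofReal_im, Complex.I_re, Complex.I_im]
    ring
  rw [hre]
  have h1 : Real.cos (2 * a) = 2 * c ^ 2 - 1 := Real.cos_two_mul a
  have h2 : Real.sin (2 * a) = 2 * s * c := Real.sin_two_mul a
  have h3 : s ^ 2 + c ^ 2 = 1 := Real.sin_sq_add_cos_sq a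
  rw [h1, h2]
  linear_combination B.re * h3
end

section
/- (Exact two-point parameter-shift rule.) Let P and H be n×n complex matrices with P Hermitian, P² = I, and H Hermitian, and let ψ ∈ ℂⁿ. Define f : ℝ → ℝ by f(a) = Re⟨exp(−i a P)ψ, H exp(−i a P)ψ⟩. Then f is differentiable at every a ∈ ℝ and its derivative is given exactly by the shifted-difference formula f′(a) = f(a + π/4) − f(a − π/4). -/
open scoped Matrix

set_option maxHeartbeats 1000000

lemma exp_neg_I_smul {n : ℕ} (P : Matrix (Fin n) (Fin n) ℂ) (hP2 : P ^ 2 = 1) (a : ℝ) :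
    NormedSpace.exp ((-(Complex.I * (a : ℂ))) • P)
      = (Complex.cos a) • (1 : Matrix (Fin n) (Fin n) ℂ) + (-(Complex.I * Complex.sin a)) • P := by
  letI : SeminormedRing (Matrix (Fin n) (Fin n) ℂ) := Matrix.linftyOpSemiNormedRing
  letI : NormedRing (Matrix (Fin n) (Fin n) ℂ) := Matrix.linftyOpNormedRing
  letI : NormedAlgebra ℂ (Matrix (Fin n) (Fin n) ℂ) := Matrix.linftyOpNormedAlgebra
  set z : ℂ := -(Complex.I * (a : ℂ)) with hz
  have hsum : HasSum (fun k : ℕ => ((Nat.factorial k : ℂ))⁻¹ • (z • P) ^ k)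
      (NormedSpace.exp (z • P)) := NormedSpace.exp_series_hasSum_exp' (z • P)
  have hz2 : ∀ k : ℕ, z ^ (2 * k) = ((-1 : ℂ)) ^ k * (a : ℂ) ^ (2 * k) := by
    intro k
    have : z ^ 2 = -((a : ℂ) ^ 2) := by
      rw [hz]; ring_nf; simp [Complex.I_sq]
    rw [pow_mul, pow_mul, this, neg_pow]
  have heven : HasSum (fun k : ℕ => ((Nat.factorial (2*k) : ℂ))⁻¹ • (z • P) ^ (2 * k))
      ((Complex.cos a) • (1 : Matrix (Fin n) (Fin n) ℂ)) := by
    have h := (Complex.hasSum_cos (a : ℂ)).smul_const (1 : Matrix (Fin n) (Fin n) ℂ)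
    convert h using 2 with k
    have hfac : (((2 * k).factorial : ℂ)) ≠ 0 := Nat.cast_ne_zero.mpr (Nat.factorial_ne_zero _)
    rw [smul_pow, pow_mul, pow_mul, hP2, one_pow, smul_smul]
    congr 1
    rw [← pow_mul, hz2 k]
    field_simp
  have hodd : HasSum (fun k : ℕ => ((Nat.factorial (2*k+1) : ℂ))⁻¹ • (z • P) ^ (2 * k + 1))
      ((-(Complex.I * Complex.sin a)) • P) := by
    rw [neg_mul_eq_neg_mul]
    have h := ((Complex.hasSum_sin (a : ℂ)).mul_left (-Complex.I)).smul_const P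
    convert h using 2 with k
    have hfac : (((2 * k + 1).factorial : ℂ)) ≠ 0 := Nat.cast_ne_zero.mpr (Nat.factorial_ne_zero _)
    have hPodd : P ^ (2 * k + 1) = P := by rw [pow_succ, pow_mul, hP2, one_pow, one_mul]
    rw [smul_pow, hPodd, smul_smul]
    congr 1
    rw [pow_succ, hz2 k, hz]
    field_simp
    try ring_nf
    try exact Or.inl trivial
  exact hsum.unique (heven.even_add_odd hodd)

/-- **Exact two-point parameter-shift rule.** Let `P` and `H` be `n × n` complex matrices
with `P` Hermitian, `P² = 1`, `H` Hermitian, and let `ψ ∈ ℂⁿ`. Define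
`f a = Re ⟨exp(-i a P) ψ, H exp(-i a P) ψ⟩`. Then `f` is differentiable at every `a : ℝ`
and `f' a = f (a + π/4) - f (a - π/4)`. -/
theorem parameter_shift_rule {n : ℕ} (P H : Matrix (Fin n) (Fin n) ℂ)
    (hP : P.IsHermitian) (hP2 : P ^ 2 = 1) (hH : H.IsHermitian) (ψ : Fin n → ℂ)
    (f : ℝ → ℝ)
    (hf : ∀ a : ℝ, f a =
      (star ((NormedSpace.exp ((-(Complex.I * (a : ℂ))) • P)).mulVec ψ) ⬝ᵥ
        H.mulVec ((NormedSpace.exp ((-(Complex.I * (a : ℂ))) • P)).mulVec ψ)).re) :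
    ∀ a : ℝ, HasDerivAt f (f (a + Real.pi / 4) - f (a - Real.pi / 4)) a := by
  have key := exp_neg_I_smul P hP2
  obtain ⟨A, B, C, hg⟩ : ∃ A B C : ℝ, ∀ b : ℝ,
      f b = (A + B) / 2 + ((A - B) / 2) * Real.cos (2 * b) + (C / 2) * Real.sin (2 * b) := by
    refine ⟨(star ψ ⬝ᵥ H.mulVec ψ).re, (star (P.mulVec ψ) ⬝ᵥ H.mulVec (P.mulVec ψ)).re,
      (Complex.I * ((star (P.mulVec ψ) ⬝ᵥ H.mulVec ψ)
        - (star ψ ⬝ᵥ H.mulVec (P.mulVec ψ)))).re, fun b => ?_⟩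
    rw [hf b, key b]
    rw [← Complex.ofReal_cos, ← Complex.ofReal_sin]
    simp only [Matrix.add_mulVec, Matrix.smul_mulVec, Matrix.one_mulVec,
      Matrix.mulVec_add, Matrix.mulVec_smul, star_add, star_smul,
      add_dotProduct, dotProduct_add, smul_dotProduct,
      dotProduct_smul, smul_eq_mul, star_neg, star_mul', Complex.star_def,
      Complex.conj_ofReal, Complex.conj_I, Real.cos_two_mul, Real.sin_two_mul]
    simp only [Complex.add_re, Complex.mul_re, Complex.mul_im, Complex.neg_re, Complex.neg_im,
      Complex.sub_re, Complex.sub_im, Complex.add_im, Complex.I_re, Complex.I_im,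
      Complex.ofReal_re, Complex.ofReal_im]
    ring_nf
    linear_combination (star (P.mulVec ψ) ⬝ᵥ H.mulVec (P.mulVec ψ)).re
      * Real.sin_sq_add_cos_sq b
  intro a
  have hfg : f = fun b : ℝ =>
      (A + B) / 2 + ((A - B) / 2) * Real.cos (2 * b) + (C / 2) * Real.sin (2 * b) := funext hg
  rw [hfg]
  have h1 : HasDerivAt (fun b : ℝ => 2 * b) 2 a := by
    simpa using (hasDerivAt_id a).const_mul (2 : ℝ)
  have hcos : HasDerivAt (fun b : ℝ => Real.cos (2 * b)) (-Real.sin (2 * a) * 2) a :=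
    (Real.hasDerivAt_cos (2 * a)).comp a h1
  have hsin : HasDerivAt (fun b : ℝ => Real.sin (2 * b)) (Real.cos (2 * a) * 2) a :=
    (Real.hasDerivAt_sin (2 * a)).comp a h1
  have hd := ((hcos.const_mul ((A - B) / 2)).const_add ((A + B) / 2)).add
    (hsin.const_mul (C / 2))
  refine hd.congr_deriv ?_
  beta_reduce
  rw [show 2 * (a + Real.pi / 4) = 2 * a + Real.pi / 2 by ring,
    show 2 * (a - Real.pi / 4) = 2 * a - Real.pi / 2 by ring,
    Real.cos_add_pi_div_two, Real.cos_sub_pi_div_two,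
    Real.sin_add_pi_div_two, Real.sin_sub_pi_div_two]
  ring
end

section
/- (Deterministic excursion lemma.) Let (x_t)_{t∈ℕ} be a sequence of nonnegative real numbers and (η_t)_{t∈ℕ} a sequence of nonnegative real numbers such that: (i) there is a constant C > 0 with |x_{t+1} − x_t| ≤ C η_t for all t; (ii) Σ_{t=0}^∞ η_t = ∞; and (iii) Σ_{t=0}^∞ η_t x_t² < ∞. Then x_t → 0 as t → ∞. -/
open Filter

/-- **Deterministic excursion lemma.** Let `(x t)` be nonnegative reals and `(η t)`
nonnegative step sizes such that (i) `|x (t+1) - x t| ≤ C * η t` for a constant `C > 0`,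
(ii) `∑ η t = ∞`, and (iii) `∑ η t * (x t)² < ∞`. Then `x t → 0`. -/
theorem excursion_lemma (x η : ℕ → ℝ)
    (hx : ∀ t, 0 ≤ x t) (hη : ∀ t, 0 ≤ η t)
    (C : ℝ) (hC : 0 < C)
    (hstep : ∀ t, |x (t + 1) - x t| ≤ C * η t)
    (hdiv : Tendsto (fun n => ∑ t ∈ Finset.range n, η t) atTop atTop)
    (hconv : Summable fun t => η t * (x t) ^ 2) :
    Tendsto x atTop (nhds 0) := by
  by_contra hne
  rw [NormedAddCommGroup.tendsto_nhds_zero] at hne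
  push_neg at hne
  obtain ⟨ε, hε, hfreq⟩ := hne
  rw [Filter.frequently_atTop] at hfreq
  have hfreq' : ∀ N, ∃ u ≥ N, ε ≤ x u := by
    intro N
    obtain ⟨u, hu, h⟩ := hfreq N
    refine ⟨u, hu, ?_⟩
    rwa [Real.norm_of_nonneg (hx u)] at h
  -- x drops below ε/2 infinitely often
  have hlow : ∀ N, ∃ t ≥ N, x t < ε / 2 := by
    by_contra h
    push_neg at h
    obtain ⟨N₀, hN₀⟩ := h
    have hsum : Summable (fun t => η (t + N₀)) := by
      have hbig : Summable (fun t => (4 / ε ^ 2) * (η (t + N₀) * x (t + N₀) ^ 2)) :=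
        (((summable_nat_add_iff N₀).mpr hconv)).mul_left _
      refine Summable.of_nonneg_of_le (fun t => hη _) (fun t => ?_) hbig
      have h1 : ε / 2 ≤ x (t + N₀) := hN₀ _ (Nat.le_add_left _ _)
      have h2 : 0 ≤ η (t + N₀) := hη _
      have h3 : 0 < ε ^ 2 := by positivity
      rw [← sub_nonneg]
      have : (4 / ε ^ 2) * (η (t + N₀) * x (t + N₀) ^ 2) - η (t + N₀)
          = (η (t + N₀) / ε ^ 2) * (4 * x (t + N₀) ^ 2 - ε ^ 2) := by
        field_simp
      rw [this]
      apply mul_nonneg (div_nonneg h2 h3.le)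
      nlinarith
    have hη_sum : Summable η := (summable_nat_add_iff N₀).mp hsum
    exact absurd hdiv (not_tendsto_atTop_of_tendsto_nhds hη_sum.hasSum.tendsto_sum_nat)
  -- choose N with small tail
  set L := ∑' t, η t * x t ^ 2 with hL
  have hS : Tendsto (fun n => ∑ t ∈ Finset.range n, η t * x t ^ 2) atTop (nhds L) :=
    hconv.hasSum.tendsto_sum_nat
  have hδ : 0 < ε ^ 3 / (8 * C) := by positivity
  obtain ⟨N, hN⟩ := (Metric.tendsto_atTop.mp hS) _ hδ
  have htail : ∀ u v : ℕ, N ≤ u → u ≤ v →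
      ∑ t ∈ Finset.Ico u v, η t * x t ^ 2 < ε ^ 3 / (8 * C) := by
    intro u v hNu huv
    have h1 : ∑ t ∈ Finset.Ico u v, η t * x t ^ 2
        = ∑ t ∈ Finset.range v, η t * x t ^ 2 - ∑ t ∈ Finset.range u, η t * x t ^ 2 :=
      Finset.sum_Ico_eq_sub _ huv
    have h2 : ∑ t ∈ Finset.range v, η t * x t ^ 2 ≤ L :=
      Summable.sum_le_tsum _ (fun t _ => mul_nonneg (hη t) (sq_nonneg _)) hconv
    have h3 : ∑ t ∈ Finset.range N, η t * x t ^ 2 ≤ ∑ t ∈ Finset.range u, η t * x t ^ 2 :=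
      Finset.sum_le_sum_of_subset_of_nonneg (Finset.range_subset_range.mpr hNu)
        (fun t _ _ => mul_nonneg (hη t) (sq_nonneg _))
    have h4 := hN N le_rfl
    rw [Real.dist_eq, abs_sub_lt_iff] at h4
    linarith [h4.2]
  -- pick excursion start u
  obtain ⟨u, hNu, hxu⟩ := hfreq' N
  -- pick some later time below ε/2
  obtain ⟨w, hw, hxw⟩ := hlow (u + 1)
  have hPw : u < w ∧ x w < ε / 2 := ⟨Nat.lt_of_lt_of_le (Nat.lt_succ_self u) hw, hxw⟩
  have hex : ∃ n, u < n ∧ x n < ε / 2 := ⟨w, hPw⟩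
  classical
  set v := Nat.find hex with hv
  have hvu : u < v := (Nat.find_spec hex).1
  have hxv : x v < ε / 2 := (Nat.find_spec hex).2
  have hmid : ∀ t, u ≤ t → t < v → ε / 2 ≤ x t := by
    intro t h1 h2
    rcases eq_or_lt_of_le h1 with rfl | h1'
    · linarith
    · have := Nat.find_min hex h2
      push_neg at this
      exact this h1'
  have htel : ∑ t ∈ Finset.Ico u v, (x (t + 1) - x t) = x v - x u := by
    rw [Finset.sum_Ico_eq_sub _ hvu.le, Finset.sum_range_sub, Finset.sum_range_sub]
    ring
  have key : x u - x v ≤ (4 * C / ε ^ 2) * ∑ t ∈ Finset.Ico u v, η t * x t ^ 2 := by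
    calc x u - x v ≤ |x v - x u| := by
          rw [abs_sub_comm]; exact le_abs_self _
      _ = |∑ t ∈ Finset.Ico u v, (x (t + 1) - x t)| := by rw [htel]
      _ ≤ ∑ t ∈ Finset.Ico u v, |x (t + 1) - x t| := Finset.abs_sum_le_sum_abs _ _
      _ ≤ ∑ t ∈ Finset.Ico u v, (4 * C / ε ^ 2) * (η t * x t ^ 2) := by
          apply Finset.sum_le_sum
          intro t ht
          rw [Finset.mem_Ico] at ht
          have hxt : ε / 2 ≤ x t := hmid t ht.1 ht.2
          refine le_trans (hstep t) ?_
          have h3 : 0 < ε ^ 2 := by positivity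
          rw [← sub_nonneg]
          have : (4 * C / ε ^ 2) * (η t * x t ^ 2) - C * η t
              = (C * η t / ε ^ 2) * (4 * x t ^ 2 - ε ^ 2) := by
            field_simp
          rw [this]
          apply mul_nonneg (div_nonneg (mul_nonneg hC.le (hη t)) h3.le)
          nlinarith
      _ = (4 * C / ε ^ 2) * ∑ t ∈ Finset.Ico u v, η t * x t ^ 2 := by
          rw [Finset.mul_sum]
  have htail' := htail u v hNu hvu.le
  have hc : (4 * C / ε ^ 2) * ∑ t ∈ Finset.Ico u v, η t * x t ^ 2
      < (4 * C / ε ^ 2) * (ε ^ 3 / (8 * C)) := by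
    apply mul_lt_mul_of_pos_left htail' (by positivity)
  have heq : (4 * C / ε ^ 2) * (ε ^ 3 / (8 * C)) = ε / 2 := by
    field_simp; ring
  linarith
end

section
/- (Almost-sure summability of weighted squared gradients.) Let (Ω, 𝒜, P) be a probability space with a filtration (ℱ_t)_{t∈ℕ}. Let L : ℝ^d → ℝ be continuously differentiable, bounded below, with β-Lipschitz gradient for some β > 0. Let (φ_t) be random vectors in ℝ^d with φ_t ℱ_t-measurable, and (g_t) random vectors with g_t ℱ_{t+1}-measurable, satisfying the recursion φ_{t+1} = φ_t − η_t g_t for deterministic step sizes η_t with 0 < η_t ≤ 1/β and Σ_t η_t² < ∞. Assume, for all t: E[g_t | ℱ_t] = ∇L(φ_t) almost surely; E[‖g_t − ∇L(φ_t)‖² | ℱ_t] ≤ v almost surely for a constant v ≥ 0; and ‖g_t‖ ≤ G almost surely for a constant G ≥ 0. Then Σ_{t=0}^∞ η_t ‖∇L(φ_t)‖² < ∞ almost surely. -/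
open MeasureTheory

lemma coord_abs_le_norm {d : ℕ} (x : EuclideanSpace ℝ (Fin d)) (i : Fin d) : |x i| ≤ ‖x‖ := by
  have h := EuclideanSpace.norm_eq x
  rw [h]
  have h1 : |x i| = Real.sqrt (‖x i‖ ^ 2) := by
    rw [Real.sqrt_sq_eq_abs]; simp [abs_abs]
  rw [h1]
  apply Real.sqrt_le_sqrt
  exact Finset.single_le_sum (f := fun j => ‖x j‖ ^ 2) (fun j _ => by positivity) (Finset.mem_univ i)

lemma descent_lemma {d : ℕ} (L : EuclideanSpace ℝ (Fin d) → ℝ) (hLdiff : ContDiff ℝ 1 L)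
    (β : ℝ) (hβ : 0 ≤ β) (hLip : ∀ x y, ‖gradient L x - gradient L y‖ ≤ β * ‖x - y‖)
    (x y : EuclideanSpace ℝ (Fin d)) :
    L y ≤ L x + (inner ℝ (gradient L x) (y - x) : ℝ) + β * ‖y - x‖ ^ 2 := by
  have hdiff : ∀ z, HasFDerivAt L (fderiv ℝ L z) z := fun z =>
    ((hLdiff.differentiable one_ne_zero) z).hasFDerivAt
  have key : ‖L y - L x - (fderiv ℝ L x) (y - x)‖ ≤ (β * ‖y - x‖) * ‖y - x‖ := by
    apply (convex_segment x y).norm_image_sub_le_of_norm_hasFDerivWithin_le'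
      (f' := fun z => fderiv ℝ L z)
      (fun z _ => (hdiff z).hasFDerivWithinAt) ?_ (left_mem_segment ℝ x y)
      (right_mem_segment ℝ x y)
    intro z hz
    have h1 : fderiv ℝ L z - fderiv ℝ L x
        = (InnerProductSpace.toDual ℝ _) (gradient L z - gradient L x) := by
      rw [map_sub]
      show _ = (InnerProductSpace.toDual ℝ _) ((InnerProductSpace.toDual ℝ _).symm (fderiv ℝ L z)) - (InnerProductSpace.toDual ℝ _) ((InnerProductSpace.toDual ℝ _).symm (fderiv ℝ L x))
      rw [LinearIsometryEquiv.apply_symm_apply, LinearIsometryEquiv.apply_symm_apply]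
    rw [h1, LinearIsometryEquiv.norm_map]
    refine le_trans (hLip z x) (mul_le_mul_of_nonneg_left ?_ hβ)
    obtain ⟨a, b, ha, hb, hab, rfl⟩ := hz
    have heq : a • x + b • y - x = b • (y - x) := by
      rw [smul_sub]
      have hx : a • x = x - b • x := by
        rw [eq_sub_iff_add_eq, ← add_smul]
        rw [add_comm a b] at hab ⊢
        rw [hab, one_smul]
      rw [hx]; abel
    rw [heq, norm_smul, Real.norm_eq_abs, abs_of_nonneg hb]
    exact mul_le_of_le_one_left (norm_nonneg _) (by linarith)
  have hfd : (fderiv ℝ L x) (y - x) = (inner ℝ (gradient L x) (y - x) : ℝ) := by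
    rw [← InnerProductSpace.toDual_apply_apply]
    congr 1
    show _ = (InnerProductSpace.toDual ℝ _) ((InnerProductSpace.toDual ℝ _).symm (fderiv ℝ L x))
    rw [LinearIsometryEquiv.apply_symm_apply]
  rw [hfd] at key
  have := (abs_le.mp (by rwa [Real.norm_eq_abs] at key)).2
  nlinarith [this]

/-- **Almost-sure summability of weighted squared gradients.** For the stochastic
gradient recursion `φ (t+1) = φ t - η t • g t` with `L` continuously differentiable,
bounded below, with `β`-Lipschitz gradient, step sizes `0 < η t ≤ 1/β` with
`∑ (η t)² < ∞`, conditionally unbiased estimators `E[g t | ℱ t] = ∇L(φ t)` with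
conditional variance bound `v` and a.s. norm bound `G`, we have
`∑ t, η t * ‖∇L(φ t)‖² < ∞` almost surely. -/
theorem summable_weighted_squared_gradients {d : ℕ}
    {Ω : Type*} {𝒜 : MeasurableSpace Ω} (μ : Measure Ω) [IsProbabilityMeasure μ]
    (ℱ : Filtration ℕ 𝒜)
    (L : EuclideanSpace ℝ (Fin d) → ℝ) (hLdiff : ContDiff ℝ 1 L)
    (hLbdd : BddBelow (Set.range L))
    (β : ℝ) (hβ : 0 < β)
    (hLip : ∀ x y, ‖gradient L x - gradient L y‖ ≤ β * ‖x - y‖)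
    (φ g : ℕ → Ω → EuclideanSpace ℝ (Fin d))
    (hφmeas : ∀ t, Measurable[ℱ t] (φ t))
    (hgmeas : ∀ t, Measurable[ℱ (t + 1)] (g t))
    (η : ℕ → ℝ) (hη0 : ∀ t, 0 < η t) (hηβ : ∀ t, η t ≤ 1 / β)
    (hη2 : Summable fun t => (η t) ^ 2)
    (hrec : ∀ t ω, φ (t + 1) ω = φ t ω - η t • g t ω)
    (v : ℝ) (hv : 0 ≤ v)
    (hunb : ∀ t, μ[g t | ℱ t] =ᵐ[μ] fun ω => gradient L (φ t ω))
    (hvar : ∀ t, ∀ᵐ ω ∂μ,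
      (μ[fun ω' => ‖g t ω' - gradient L (φ t ω')‖ ^ 2 | ℱ t]) ω ≤ v)
    (G : ℝ) (hG : 0 ≤ G) (hGbd : ∀ t, ∀ᵐ ω ∂μ, ‖g t ω‖ ≤ G) :
    ∀ᵐ ω ∂μ, Summable fun t => η t * ‖gradient L (φ t ω)‖ ^ 2 := by
  classical
  obtain ⟨c, hc⟩ := hLbdd
  have hLc : ∀ x, c ≤ L x := fun x => hc ⟨x, rfl⟩
  have hβ' : (0:ℝ) ≤ β := hβ.le
  have hgradcont : Continuous (gradient L) := by
    have : LipschitzWith β.toNNReal (gradient L) := by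
      apply LipschitzWith.of_dist_le_mul
      intro x y
      rw [dist_eq_norm, dist_eq_norm]
      simpa [Real.coe_toNNReal β hβ'] using hLip x y
    exact this.continuous
  have hφm : ∀ t, Measurable (φ t) := fun t => (hφmeas t).mono (ℱ.le t) le_rfl
  have hgmm : ∀ t, Measurable (g t) := fun t => (hgmeas t).mono (ℱ.le (t+1)) le_rfl
  have ham : ∀ t, Measurable (fun ω => gradient L (φ t ω)) := fun t =>
    hgradcont.measurable.comp (hφm t)
  have hLmeas : Measurable L := hLdiff.continuous.measurable
  have hEall : ∀ᵐ ω ∂μ, ∀ t, ‖g t ω‖ ≤ G := ae_all_iff.mpr hGbd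
  have hginta : ∀ t, Integrable (g t) μ := fun t =>
    (integrable_const G).mono' (hgmm t).aestronglyMeasurable (hGbd t)
  have main : ∀ n : ℕ, ∀ᵐ ω ∂μ, ‖φ 0 ω‖ ≤ (n:ℝ) →
      Summable fun t => η t * ‖gradient L (φ t ω)‖ ^ 2 := by
    intro n
    set A : Set Ω := {ω | ‖φ 0 ω‖ ≤ (n:ℝ)} with hAdef
    have hA0 : MeasurableSet[ℱ 0] A := by
      have hAeq : A = φ 0 ⁻¹' Metric.closedBall 0 (n:ℝ) := by
        ext ω
        simp [hAdef, Metric.mem_closedBall, dist_zero_right]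
      rw [hAeq]
      exact hφmeas 0 measurableSet_closedBall
    have hAt : ∀ t, MeasurableSet[ℱ t] A := fun t => ℱ.mono (Nat.zero_le t) A hA0
    have hA : MeasurableSet A := ℱ.le 0 A hA0
    set R : ℕ → ℝ := fun t => (n:ℝ) + G * ∑ s ∈ Finset.range t, η s with hRdef
    have hR0 : ∀ t, 0 ≤ R t := by
      intro t
      have : 0 ≤ ∑ s ∈ Finset.range t, η s :=
        Finset.sum_nonneg fun s _ => (hη0 s).le
      have hn : (0:ℝ) ≤ (n:ℝ) := Nat.cast_nonneg n
      positivity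
    have hφbd : ∀ ω, (∀ t, ‖g t ω‖ ≤ G) → ω ∈ A → ∀ t, ‖φ t ω‖ ≤ R t := by
      intro ω hg hωA t
      induction t with
      | zero => simpa [hRdef] using (show ‖φ 0 ω‖ ≤ (n:ℝ) from hωA)
      | succ t ih =>
        rw [hrec t ω]
        calc ‖φ t ω - η t • g t ω‖ ≤ ‖φ t ω‖ + ‖η t • g t ω‖ := norm_sub_le _ _
          _ ≤ R t + η t * G := by
              have h1 : ‖η t • g t ω‖ = η t * ‖g t ω‖ := by
                rw [norm_smul, Real.norm_eq_abs, abs_of_nonneg (hη0 t).le]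
              rw [h1]
              have := mul_le_mul_of_nonneg_left (hg t) (hη0 t).le
              linarith [ih]
          _ = R (t+1) := by
              simp only [hRdef, Finset.sum_range_succ]
              ring
    have hax : ∀ t, ∃ M : ℝ, 0 ≤ M ∧ ∀ x : EuclideanSpace ℝ (Fin d),
        ‖x‖ ≤ R t → |L x| ≤ M ∧ ‖gradient L x‖ ≤ M := by
      intro t
      obtain ⟨C, hC⟩ := (isCompact_closedBall (0 : EuclideanSpace ℝ (Fin d))
        (R t)).exists_bound_of_continuousOn hLdiff.continuous.continuousOn
      refine ⟨max (max C (‖gradient L 0‖ + β * R t)) 0, le_max_right _ _, fun x hx => ?_⟩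
      constructor
      · have := hC x (by rwa [Metric.mem_closedBall, dist_zero_right])
        rw [Real.norm_eq_abs] at this
        exact le_trans this (le_trans (le_max_left _ _) (le_max_left _ _))
      · have h1 := hLip x 0
        rw [sub_zero] at h1
        have h2 : ‖gradient L x‖ - ‖gradient L 0‖ ≤ ‖gradient L x - gradient L 0‖ :=
          norm_sub_norm_le _ _
        have h3 : β * ‖x‖ ≤ β * R t := mul_le_mul_of_nonneg_left hx hβ'
        have : ‖gradient L x‖ ≤ ‖gradient L 0‖ + β * R t := by linarith
        exact le_trans this (le_trans (le_max_right _ _) (le_max_left _ _))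
    choose M hM0 hMb using hax
    set ν := μ.restrict A with hν
    haveI : IsFiniteMeasure ν := by
      constructor
      rw [hν, Measure.restrict_apply_univ]
      exact lt_of_le_of_lt (measure_mono (Set.subset_univ A)) (measure_lt_top μ _)
    have haeA : ∀ᵐ ω ∂ν, ω ∈ A := ae_restrict_mem hA
    have haegν : ∀ᵐ ω ∂ν, ∀ t, ‖g t ω‖ ≤ G := ae_restrict_of_ae hEall
    have haeφ : ∀ᵐ ω ∂ν, ∀ t, ‖φ t ω‖ ≤ R t := by
      filter_upwards [haeA, haegν] with ω h1 h2
      exact hφbd ω h2 h1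
    have hLint : ∀ t, Integrable (fun ω => L (φ t ω)) ν := by
      intro t
      apply (integrable_const (M t)).mono'
        ((hLmeas.comp (hφm t)).aestronglyMeasurable)
      filter_upwards [haeφ] with ω h
      rw [Real.norm_eq_abs]
      exact (hMb t _ (h t)).1
    have haint : ∀ t, Integrable (fun ω => ‖gradient L (φ t ω)‖ ^ 2) ν := by
      intro t
      apply (integrable_const ((M t)^2)).mono'
        (((ham t).norm.pow_const 2).aestronglyMeasurable)
      filter_upwards [haeφ] with ω h
      rw [Real.norm_eq_abs, abs_of_nonneg (by positivity)]
      exact pow_le_pow_left₀ (norm_nonneg _) (hMb t _ (h t)).2 2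
    have hg2int : ∀ t, Integrable (fun ω => ‖g t ω‖ ^ 2) ν := by
      intro t
      apply (integrable_const (G^2)).mono' (((hgmm t).norm.pow_const 2).aestronglyMeasurable)
      filter_upwards [haegν] with ω h
      rw [Real.norm_eq_abs, abs_of_nonneg (by positivity)]
      exact pow_le_pow_left₀ (norm_nonneg _) (h t) 2
    have hinner_int : ∀ t, Integrable
        (fun ω => (inner ℝ (gradient L (φ t ω)) (g t ω) : ℝ)) ν := by
      intro t
      apply (integrable_const (M t * G)).mono'
        (((ham t).inner (hgmm t)).aestronglyMeasurable)
      filter_upwards [haeφ, haegν] with ω h1 h2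
      rw [Real.norm_eq_abs]
      exact le_trans (abs_real_inner_le_norm _ _)
        (mul_le_mul (hMb t _ (h1 t)).2 (h2 t) (norm_nonneg _) (hM0 t))
    -- key identity
    have key : ∀ t, ∫ ω, (inner ℝ (gradient L (φ t ω)) (g t ω) : ℝ) ∂ν
        = ∫ ω, ‖gradient L (φ t ω)‖ ^ 2 ∂ν := by
      intro t
      have hcm : ∀ i : Fin d, Measurable fun x : EuclideanSpace ℝ (Fin d) => x i :=
        fun i => (EuclideanSpace.proj (𝕜 := ℝ) i).continuous.measurable
      have hco : ∀ i : Fin d,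
          ∫ ω, A.indicator (fun ω => gradient L (φ t ω) i) ω * g t ω i ∂μ
          = ∫ ω, A.indicator (fun ω => gradient L (φ t ω) i) ω
              * gradient L (φ t ω) i ∂μ := by
        intro i
        set f : Ω → ℝ := A.indicator fun ω => gradient L (φ t ω) i with hfdef
        have hfsm : StronglyMeasurable[ℱ t] f :=
          (((hcm i).comp (hgradcont.measurable.comp (hφmeas t))).indicator
            (hAt t)).stronglyMeasurable
        have hfbd : ∀ᵐ ω ∂μ, ‖f ω‖ ≤ M t := by
          filter_upwards [hEall] with ω hg
          by_cases hωA : ω ∈ A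
          · rw [hfdef, Set.indicator_of_mem hωA, Real.norm_eq_abs]
            exact le_trans (coord_abs_le_norm _ i) (hMb t _ (hφbd ω hg hωA t)).2
          · rw [hfdef, Set.indicator_of_notMem hωA]
            simpa using hM0 t
        have hgiint : Integrable (fun ω => g t ω i) μ := by
          apply (integrable_const G).mono' ((hcm i).comp (hgmm t)).aestronglyMeasurable
          filter_upwards [hGbd t] with ω h
          rw [Real.norm_eq_abs]
          exact le_trans (coord_abs_le_norm _ i) h
        have pull := condExp_stronglyMeasurable_mul_of_bound (ℱ.le t) hfsm hgiint (M t) hfbd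
        have hcond : (fun ω => (μ[g t | ℱ t]) ω i) =ᵐ[μ] μ[(fun ω => g t ω i) | ℱ t] := by
          refine ae_eq_condExp_of_forall_setIntegral_eq (ℱ.le t) hgiint ?_ ?_ ?_
          · intro s _ _
            exact ((EuclideanSpace.proj (𝕜 := ℝ) i).integrable_comp
              integrable_condExp).integrableOn
          · intro s hs hμs
            have h1 : ∫ ω in s, (μ[g t|ℱ t]) ω i ∂μ
                = EuclideanSpace.proj (𝕜 := ℝ) i (∫ ω in s, (μ[g t|ℱ t]) ω ∂μ) :=
              (EuclideanSpace.proj (𝕜 := ℝ) i).integral_comp_comm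
                integrable_condExp.integrableOn
            have h2 : ∫ ω in s, g t ω i ∂μ
                = EuclideanSpace.proj (𝕜 := ℝ) i (∫ ω in s, g t ω ∂μ) :=
              (EuclideanSpace.proj (𝕜 := ℝ) i).integral_comp_comm
                (hginta t).integrableOn
            rw [h1, h2, setIntegral_condExp (ℱ.le t) (hginta t) hs]
          · exact ((EuclideanSpace.proj (𝕜 := ℝ) i).continuous.comp_stronglyMeasurable
              stronglyMeasurable_condExp).aestronglyMeasurable
        have hcond2 : μ[(fun ω => g t ω i) | ℱ t] =ᵐ[μ] fun ω => gradient L (φ t ω) i := by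
          refine hcond.symm.trans ?_
          filter_upwards [hunb t] with ω h
          show (μ[g t|ℱ t]) ω i = gradient L (φ t ω) i
          rw [h]
        have hfgae : μ[f * (fun ω => g t ω i) | ℱ t]
            =ᵐ[μ] fun ω => f ω * gradient L (φ t ω) i := by
          refine pull.trans ?_
          filter_upwards [hcond2] with ω h
          show f ω * (μ[(fun ω => g t ω i)|ℱ t]) ω = _
          rw [h]
        calc ∫ ω, f ω * g t ω i ∂μ
            = ∫ ω, (μ[f * (fun ω => g t ω i) | ℱ t]) ω ∂μ :=
              (integral_condExp (ℱ.le t)).symm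
          _ = ∫ ω, f ω * gradient L (φ t ω) i ∂μ := integral_congr_ae hfgae
      have hindg_int : ∀ i : Fin d, Integrable
          (fun ω => A.indicator (fun ω => gradient L (φ t ω) i) ω * g t ω i) μ := by
        intro i
        apply (integrable_const (M t * G)).mono'
        · exact ((((hcm i).comp (ham t)).indicator hA).mul
            ((hcm i).comp (hgmm t))).aestronglyMeasurable
        filter_upwards [hEall] with ω hg
        rw [Real.norm_eq_abs, abs_mul]
        by_cases hωA : ω ∈ A
        · rw [Set.indicator_of_mem hωA]
          exact mul_le_mul (le_trans (coord_abs_le_norm _ i) (hMb t _ (hφbd ω hg hωA t)).2)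
            (le_trans (coord_abs_le_norm _ i) (hg t)) (abs_nonneg _) (hM0 t)
        · rw [Set.indicator_of_notMem hωA]
          simpa using mul_nonneg (hM0 t) hG
      have hinda_int : ∀ i : Fin d, Integrable
          (fun ω => A.indicator (fun ω => gradient L (φ t ω) i) ω
            * gradient L (φ t ω) i) μ := by
        intro i
        apply (integrable_const (M t * M t)).mono'
        · exact ((((hcm i).comp (ham t)).indicator hA).mul
            ((hcm i).comp (ham t))).aestronglyMeasurable
        filter_upwards [hEall] with ω hg
        rw [Real.norm_eq_abs, abs_mul]
        by_cases hωA : ω ∈ A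
        · rw [Set.indicator_of_mem hωA]
          have hb := le_trans (coord_abs_le_norm _ i) (hMb t _ (hφbd ω hg hωA t)).2
          exact mul_le_mul hb hb (abs_nonneg _) (hM0 t)
        · rw [Set.indicator_of_notMem hωA]
          simpa using mul_nonneg (hM0 t) (hM0 t)
      have lhs_eq : ∫ ω, (inner ℝ (gradient L (φ t ω)) (g t ω) : ℝ) ∂ν
          = ∑ i : Fin d, ∫ ω, A.indicator (fun ω => gradient L (φ t ω) i) ω
              * g t ω i ∂μ := by
        rw [hν, ← integral_indicator hA, ← integral_finset_sum _ (fun i _ => hindg_int i)]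
        apply integral_congr_ae
        apply Filter.Eventually.of_forall
        intro ω
        by_cases hωA : ω ∈ A
        · rw [Set.indicator_of_mem hωA, PiLp.inner_apply]
          refine Finset.sum_congr rfl fun i _ => ?_
          rw [Set.indicator_of_mem hωA]
          simp [RCLike.inner_apply]; ring
        · rw [Set.indicator_of_notMem hωA]
          symm
          refine Finset.sum_eq_zero fun i _ => ?_
          rw [Set.indicator_of_notMem hωA, zero_mul]
      have rhs_eq : ∫ ω, ‖gradient L (φ t ω)‖ ^ 2 ∂ν
          = ∑ i : Fin d, ∫ ω, A.indicator (fun ω => gradient L (φ t ω) i) ω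
              * gradient L (φ t ω) i ∂μ := by
        rw [hν, ← integral_indicator hA, ← integral_finset_sum _ (fun i _ => hinda_int i)]
        apply integral_congr_ae
        apply Filter.Eventually.of_forall
        intro ω
        by_cases hωA : ω ∈ A
        · rw [Set.indicator_of_mem hωA, ← real_inner_self_eq_norm_sq, PiLp.inner_apply]
          refine Finset.sum_congr rfl fun i _ => ?_
          rw [Set.indicator_of_mem hωA]
          simp [RCLike.inner_apply]; ring
        · rw [Set.indicator_of_notMem hωA]
          symm
          refine Finset.sum_eq_zero fun i _ => ?_
          rw [Set.indicator_of_notMem hωA, zero_mul]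
      rw [lhs_eq, rhs_eq]
      exact Finset.sum_congr rfl fun i _ => hco i
    set I : ℕ → ℝ := fun t => ∫ ω, L (φ t ω) ∂ν with hIdef
    set b : ℕ → ℝ := fun t => ∫ ω, ‖gradient L (φ t ω)‖ ^ 2 ∂ν with hbdef
    have hb0 : ∀ t, 0 ≤ b t := fun t => integral_nonneg (fun ω => by positivity)
    have hIlb : ∀ t, c * (μ A).toReal ≤ I t := by
      intro t
      have h1 : ∫ (_ : Ω), c ∂ν ≤ I t :=
        integral_mono (integrable_const c) (hLint t) (fun ω => hLc _)
      rw [integral_const] at h1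
      rw [hν, measureReal_def, Measure.restrict_apply_univ] at h1
      simpa [smul_eq_mul, mul_comm] using h1
    have hstep : ∀ t, I (t+1) ≤ I t - η t * b t + β * G^2 * η t ^ 2 := by
      intro t
      have hptw : ∀ ω, L (φ (t+1) ω) ≤ L (φ t ω)
          - η t * (inner ℝ (gradient L (φ t ω)) (g t ω) : ℝ)
          + (β * η t ^ 2) * ‖g t ω‖ ^ 2 := by
        intro ω
        have hd := descent_lemma L hLdiff β hβ' hLip (φ t ω) (φ (t+1) ω)
        have hsub : φ (t+1) ω - φ t ω = -(η t • g t ω) := by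
          rw [hrec t ω]; abel
        rw [hsub, inner_neg_right, real_inner_smul_right, norm_neg, norm_smul,
          Real.norm_eq_abs, abs_of_nonneg (hη0 t).le, mul_pow] at hd
        nlinarith [hd]
      have h1 : I (t+1) ≤ ∫ ω, (L (φ t ω)
          - η t * (inner ℝ (gradient L (φ t ω)) (g t ω) : ℝ)
          + (β * η t ^ 2) * ‖g t ω‖ ^ 2) ∂ν := by
        exact integral_mono (hLint (t+1))
          (((hLint t).sub ((hinner_int t).const_mul (η t))).add
            ((hg2int t).const_mul (β * η t ^ 2))) hptw
      have hi2 : Integrable (fun ω => η t * (inner ℝ (gradient L (φ t ω)) (g t ω) : ℝ)) ν :=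
        (hinner_int t).const_mul (η t)
      have ha1 : Integrable (fun ω => L (φ t ω)
          - η t * (inner ℝ (gradient L (φ t ω)) (g t ω) : ℝ)) ν := (hLint t).sub hi2
      have ha2 : Integrable (fun ω => (β * η t ^ 2) * ‖g t ω‖ ^ 2) ν :=
        (hg2int t).const_mul (β * η t ^ 2)
      rw [integral_add ha1 ha2, integral_sub (hLint t) hi2] at h1
      have e1 : ∫ ω, η t * (inner ℝ (gradient L (φ t ω)) (g t ω) : ℝ) ∂ν = η t * b t := by
        have := integral_smul (μ := ν) (η t)
          (fun ω => (inner ℝ (gradient L (φ t ω)) (g t ω) : ℝ))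
        simp only [smul_eq_mul] at this
        rw [this, key t]
      have e2 : ∫ ω, (β * η t ^ 2) * ‖g t ω‖ ^ 2 ∂ν
          = (β * η t ^ 2) * ∫ ω, ‖g t ω‖ ^ 2 ∂ν := by
        have := integral_smul (μ := ν) (β * η t ^ 2) (fun ω => ‖g t ω‖ ^ 2)
        simpa only [smul_eq_mul] using this
      rw [e1, e2] at h1
      have hgG : ∫ ω, ‖g t ω‖ ^ 2 ∂ν ≤ G ^ 2 := by
        have h2 : ∫ ω, ‖g t ω‖ ^ 2 ∂ν ≤ ∫ (_ : Ω), G ^ 2 ∂ν := by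
          apply integral_mono_ae (hg2int t) (integrable_const _)
          filter_upwards [haegν] with ω h
          exact pow_le_pow_left₀ (norm_nonneg _) (h t) 2
        rw [integral_const, hν, measureReal_def, Measure.restrict_apply_univ] at h2
        have h3 : (μ A).toReal ≤ 1 := by
          have := prob_le_one (μ := μ) (s := A)
          calc (μ A).toReal ≤ (1 : ENNReal).toReal :=
                ENNReal.toReal_mono ENNReal.one_ne_top this
            _ = 1 := by simp
        have h4 : (0:ℝ) ≤ (μ A).toReal := ENNReal.toReal_nonneg
        rw [smul_eq_mul] at h2
        nlinarith [h2, h3, h4, sq_nonneg G]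
      have h5 : (β * η t ^ 2) * ∫ ω, ‖g t ω‖ ^ 2 ∂ν ≤ (β * η t ^ 2) * G ^ 2 :=
        mul_le_mul_of_nonneg_left hgG (by positivity)
      have h6 : β * G ^ 2 * η t ^ 2 = (β * η t ^ 2) * G ^ 2 := by ring
      have hIt : ∫ (a : Ω), L (φ t a) ∂ν = I t := rfl
      rw [hIt] at h1
      linarith
    have htel : ∀ T, I T + ∑ t ∈ Finset.range T, η t * b t
        ≤ I 0 + β * G^2 * ∑ t ∈ Finset.range T, η t ^ 2 := by
      intro T
      induction T with
      | zero => simp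
      | succ T ih =>
        rw [Finset.sum_range_succ, Finset.sum_range_succ]
        have := hstep T
        linarith
    have hsum : Summable (fun t => η t * b t) := by
      apply summable_of_sum_range_le (c := I 0 - c * (μ A).toReal + β * G^2 * ∑' t, η t ^ 2)
        (fun t => mul_nonneg (hη0 t).le (hb0 t))
      intro T
      have h1 := htel T
      have h2 := hIlb T
      have h3 : ∑ t ∈ Finset.range T, η t ^ 2 ≤ ∑' t, η t ^ 2 :=
        Summable.sum_le_tsum _ (fun t _ => sq_nonneg _) hη2
      have h4 : β * G^2 * ∑ t ∈ Finset.range T, η t ^ 2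
          ≤ β * G^2 * ∑' t, η t ^ 2 :=
        mul_le_mul_of_nonneg_left h3 (by positivity)
      linarith
    -- lintegral argument
    have hfmeas : ∀ t, AEMeasurable
        (fun ω => ENNReal.ofReal (η t * ‖gradient L (φ t ω)‖^2)) ν := fun t =>
      ((((ham t).norm.pow_const 2).const_mul (η t)).ennreal_ofReal).aemeasurable
    have hlint : ∫⁻ ω, ∑' t, ENNReal.ofReal (η t * ‖gradient L (φ t ω)‖^2) ∂ν ≠ ⊤ := by
      rw [lintegral_tsum hfmeas]
      have heach : ∀ t, ∫⁻ ω, ENNReal.ofReal (η t * ‖gradient L (φ t ω)‖^2) ∂ν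
          = ENNReal.ofReal (η t * b t) := by
        intro t
        rw [← ofReal_integral_eq_lintegral_ofReal ((haint t).const_mul (η t))
          (Filter.Eventually.of_forall fun ω => mul_nonneg (hη0 t).le (by positivity))]
        congr 1
        simpa [smul_eq_mul] using integral_smul (η t) fun ω => ‖gradient L (φ t ω)‖ ^ 2
      rw [tsum_congr heach,
        ← ENNReal.ofReal_tsum_of_nonneg (fun t => mul_nonneg (hη0 t).le (hb0 t)) hsum]
      exact ENNReal.ofReal_ne_top
    have haes := ae_lt_top' (AEMeasurable.ennreal_tsum hfmeas) hlint
    have hfinal : ∀ᵐ ω ∂ν, Summable fun t => η t * ‖gradient L (φ t ω)‖ ^ 2 := by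
      filter_upwards [haes] with ω hω
      have h1 : Summable fun t =>
          (ENNReal.ofReal (η t * ‖gradient L (φ t ω)‖^2)).toReal :=
        ENNReal.summable_toReal hω.ne
      refine h1.congr fun t => ?_
      rw [ENNReal.toReal_ofReal (mul_nonneg (hη0 t).le (by positivity))]
    rw [hν, ae_restrict_iff' hA] at hfinal
    exact hfinal
  have hall := ae_all_iff.mpr main
  filter_upwards [hall] with ω hω
  exact hω ⌈‖φ 0 ω‖⌉₊ (Nat.le_ceil _)
end
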